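/- Let $d\ge1$, $-1 \le B < A \le 1$, and let $(\gamma_n)_{n\ge1}$ be strictly increasing positive reals with $\sum_{n\ge1}\gamma_n^{-(d+1)} < \infty$. For complex $z$ with $|z| < \gamma_1$ set $\Psi(z) = -(d+1)\sum_{n\ge1}\frac{z^{d+1}}{\gamma_n^{d+1}-z^{d+1}}$. If $A - B + |B|\,\Psi(|z|) > 0$, then $\left|\frac{\Psi(z)}{A - B(1+\Psi(z))}\right| \le \frac{-\Psi(|z|)}{A - B + |B|\,\Psi(|z|)}$. -/

import Mathlib

theorem stmt_12 (d : ℕ) (hd : 1 ≤ d) (A B : ℝ) (hB : -1 ≤ B) (hBA : B < A) (hA : A ≤ 1)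
    (γ : ℕ → ℝ) (hγ : StrictMono γ) (hγpos : ∀ n, 0 < γ n)
    (hsum : Summable fun n => ((γ n) ^ (d + 1))⁻¹)
    (Ψ : ℂ → ℂ)
    (hΨ : ∀ w : ℂ, ‖w‖ < γ 0 →
      Ψ w = -(((d : ℂ) + 1) * ∑' n, w ^ (d + 1) / (((γ n : ℂ)) ^ (d + 1) - w ^ (d + 1))))
    (ψ : ℝ → ℝ)
    (hψ : ∀ r : ℝ, ψ r = -(((d : ℝ) + 1) * ∑' n, r ^ (d + 1) / ((γ n) ^ (d + 1) - r ^ (d + 1)))) :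
    ∀ z : ℂ, ‖z‖ < γ 0 →
      A - B + |B| * ψ (‖z‖) > 0 →
      ‖Ψ z / ((A : ℂ) - (B : ℂ) * (1 + Ψ z))‖ ≤
        (-ψ (‖z‖)) / (A - B + |B| * ψ (‖z‖)) := by
  intro z hz hpos
  set r := ‖z‖ with hrdef
  have hr0 : 0 ≤ r := norm_nonneg z
  have hγ0 : 0 < γ 0 := hγpos 0
  -- denominators positive
  have hden : ∀ n, 0 < (γ n) ^ (d + 1) - r ^ (d + 1) := by
    intro n
    have h1 : r < γ n := lt_of_lt_of_le hz (hγ.le_iff_le.mpr (Nat.zero_le n))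
    have := pow_lt_pow_left₀ h1 hr0 (by omega : d + 1 ≠ 0)
    linarith
  set g : ℕ → ℝ := fun n => r ^ (d + 1) / ((γ n) ^ (d + 1) - r ^ (d + 1)) with hg
  have hgnn : ∀ n, 0 ≤ g n := fun n =>
    div_nonneg (pow_nonneg hr0 _) (hden n).le
  -- summability of g
  have hc : 0 < 1 - (r / γ 0) ^ (d + 1) := by
    have : (r / γ 0) ^ (d + 1) < 1 := by
      apply pow_lt_one₀ (div_nonneg hr0 hγ0.le) _ (by omega)
      exact (div_lt_one hγ0).mpr hz
    linarith
  have hgsum : Summable g := by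
    refine Summable.of_nonneg_of_le hgnn ?_ (hsum.mul_left (r ^ (d + 1) / (1 - (r / γ 0) ^ (d + 1))))
    intro n
    have hγn : γ 0 ≤ γ n := hγ.le_iff_le.mpr (Nat.zero_le n)
    have hγnp : 0 < (γ n) ^ (d + 1) := pow_pos (hγpos n) _
    have key : (1 - (r / γ 0) ^ (d + 1)) * (γ n) ^ (d + 1) ≤ (γ n) ^ (d + 1) - r ^ (d + 1) := by
      have h1 : r ^ (d + 1) ≤ (r / γ 0) ^ (d + 1) * (γ n) ^ (d + 1) := by
        rw [div_pow, div_mul_eq_mul_div, le_div_iff₀ (pow_pos hγ0 _)]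
        have := pow_le_pow_left₀ hγ0.le hγn (d + 1)
        nlinarith [pow_nonneg hr0 (d + 1)]
      nlinarith
    rw [hg, div_le_iff₀ (hden n)]
    have h2 : r ^ (d + 1) / (1 - (r / γ 0) ^ (d + 1)) * ((γ n) ^ (d + 1))⁻¹
        * ((1 - (r / γ 0) ^ (d + 1)) * (γ n) ^ (d + 1)) = r ^ (d + 1) := by
      have := hc.ne'
      have := hγnp.ne'
      generalize (1 - (r / γ 0) ^ (d + 1)) = c at *
      generalize ((γ n) ^ (d + 1) : ℝ) = gn at *
      field_simp
    calc r ^ (d + 1)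
        = r ^ (d + 1) / (1 - (r / γ 0) ^ (d + 1)) * ((γ n) ^ (d + 1))⁻¹
          * ((1 - (r / γ 0) ^ (d + 1)) * (γ n) ^ (d + 1)) := h2.symm
      _ ≤ _ := by
          apply mul_le_mul_of_nonneg_left key
          positivity
  -- termwise bound on complex terms
  set F : ℕ → ℂ := fun n => z ^ (d + 1) / (((γ n : ℂ)) ^ (d + 1) - z ^ (d + 1)) with hF
  have hterm : ∀ n, ‖F n‖ ≤ g n := by
    intro n
    rw [hF]
    simp only [norm_div, norm_pow]
    have hnum : ‖z‖ ^ (d + 1) = r ^ (d + 1) := rfl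
    have hlow : (γ n) ^ (d + 1) - r ^ (d + 1)
        ≤ ‖(γ n : ℂ) ^ (d + 1) - z ^ (d + 1)‖ := by
      have := norm_sub_norm_le ((γ n : ℂ) ^ (d + 1)) (z ^ (d + 1))
      have h1 : ‖(γ n : ℂ) ^ (d + 1)‖ = (γ n) ^ (d + 1) := by
        rw [norm_pow, Complex.norm_real, Real.norm_eq_abs, abs_of_pos (hγpos n)]
      have h2 : ‖z ^ (d + 1)‖ = r ^ (d + 1) := by rw [norm_pow]
      calc (γ n) ^ (d + 1) - r ^ (d + 1)
          = ‖(γ n : ℂ) ^ (d + 1)‖ - ‖z ^ (d + 1)‖ := by rw [h1, h2]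
        _ ≤ _ := by
            simpa using
              norm_sub_norm_le ((γ n : ℂ) ^ (d + 1)) (z ^ (d + 1))
    rw [hg]
    exact div_le_div₀ (pow_nonneg hr0 _) le_rfl (hden n) hlow
  have hFsum : Summable F := by
    rw [← summable_norm_iff]
    exact Summable.of_nonneg_of_le (fun n => norm_nonneg _) hterm hgsum
  -- bound |Ψ z| ≤ -ψ r
  have hpsir : -ψ r = ((d : ℝ) + 1) * ∑' n, g n := by rw [hψ r, neg_neg]
  have hΨbound : ‖Ψ z‖ ≤ -ψ r := by
    rw [hΨ z hz, hpsir]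
    rw [norm_neg, norm_mul]
    have h1 : ‖(d : ℂ) + 1‖ = (d : ℝ) + 1 := by
      rw [show ((d : ℂ) + 1) = ((d + 1 : ℝ) : ℂ) by push_cast; ring, Complex.norm_real, Real.norm_eq_abs]
      rw [abs_of_pos (by positivity)]
    rw [h1]
    apply mul_le_mul_of_nonneg_left _ (by positivity)
    calc ‖∑' n, F n‖ = ‖∑' n, F n‖ := rfl
      _ ≤ ∑' n, ‖F n‖ := norm_tsum_le_tsum_norm (by
          exact Summable.of_nonneg_of_le (fun n => norm_nonneg _) hterm hgsum)
      _ ≤ ∑' n, g n := Summable.tsum_le_tsum hterm (by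
          exact Summable.of_nonneg_of_le (fun n => norm_nonneg _) hterm hgsum) hgsum
  -- denominator lower bound
  have hdlow : A - B + |B| * ψ r ≤ ‖(A : ℂ) - (B : ℂ) * (1 + Ψ z)‖ := by
    have heq : (A : ℂ) - (B : ℂ) * (1 + Ψ z) = ((A - B : ℝ) : ℂ) - (B : ℂ) * Ψ z := by
      push_cast; ring
    rw [heq]
    have h1 : ‖((A - B : ℝ) : ℂ)‖ = A - B := by
      rw [Complex.norm_real, Real.norm_eq_abs, abs_of_pos (by linarith)]
    have h2 : ‖(B : ℂ) * Ψ z‖ ≤ |B| * (-ψ r) := by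
      rw [norm_mul, Complex.norm_real, Real.norm_eq_abs]
      exact mul_le_mul_of_nonneg_left hΨbound (abs_nonneg B)
    have := norm_sub_norm_le (((A - B : ℝ) : ℂ)) ((B : ℂ) * Ψ z)
    rw [h1] at this
    nlinarith
  -- conclude
  rw [norm_div]
  have hψnn : 0 ≤ -ψ r := le_trans (norm_nonneg _) hΨbound
  exact div_le_div₀ hψnn hΨbound hpos hdlow
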